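/- In the multi-view mixture model, the second-order moment matrix P_{1,2} = E[x1 ⊗ x2] equals M1 diag(w) M2^T, and the third-order moment P_{1,2,3}(η) = E[(x1 ⊗ x2)⟨η, x3⟩] equals M1 diag(M3^T η) diag(w) M2^T for all η in R^d. -/

import Mathlib

open MeasureTheory

/-- In the multi-view mixture model, the second-order moment matrix
`P_{1,2} = E[x1 ⊗ x2]` equals `M1 diag(w) M2ᵀ`, and the third-order moment
`P_{1,2,3}(η) = E[(x1 ⊗ x2)⟨η, x3⟩]` equals `M1 diag(M3ᵀ η) diag(w) M2ᵀ` for all `η`. -/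
theorem stmt_3 {d k : ℕ} {Ω : Type*} [MeasurableSpace Ω]
    (μ : Measure Ω) [IsProbabilityMeasure μ]
    (h : Ω → Fin k) (hmh : Measurable h)
    (x1 x2 x3 : Ω → Fin d → ℝ)
    (w : Fin k → ℝ) (M1 M2 M3 : Matrix (Fin d) (Fin k) ℝ)
    (hw : ∀ j, (μ {ω | h ω = j}).toReal = w j)
    (hmean1 : ∀ i j, ∫ ω in {ω | h ω = j}, x1 ω i ∂μ = w j * M1 i j)
    (hmean2 : ∀ i j, ∫ ω in {ω | h ω = j}, x2 ω i ∂μ = w j * M2 i j)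
    (hmean3 : ∀ i j, ∫ ω in {ω | h ω = j}, x3 ω i ∂μ = w j * M3 i j)
    (hint2 : ∀ i j, Integrable (fun ω => x1 ω i * x2 ω j) μ)
    (hint3 : ∀ i j a, Integrable (fun ω => x1 ω i * x2 ω j * x3 ω a) μ)
    (hci2 : ∀ i j t,
      (∫ ω in {ω | h ω = t}, x1 ω i * x2 ω j ∂μ) * w t
        = (∫ ω in {ω | h ω = t}, x1 ω i ∂μ) * (∫ ω in {ω | h ω = t}, x2 ω j ∂μ))
    (hci3 : ∀ i j a t,
      (∫ ω in {ω | h ω = t}, x1 ω i * x2 ω j * x3 ω a ∂μ) * (w t) ^ 2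
        = (∫ ω in {ω | h ω = t}, x1 ω i ∂μ) * (∫ ω in {ω | h ω = t}, x2 ω j ∂μ)
            * (∫ ω in {ω | h ω = t}, x3 ω a ∂μ)) :
    Matrix.of (fun i j => ∫ ω, x1 ω i * x2 ω j ∂μ)
        = M1 * Matrix.diagonal w * M2.transpose ∧
    ∀ η : Fin d → ℝ,
      Matrix.of (fun i j => ∫ ω, x1 ω i * x2 ω j * (∑ a, η a * x3 ω a) ∂μ)
        = M1 * Matrix.diagonal (M3.transpose.mulVec η) * Matrix.diagonal w
            * M2.transpose := by
  -- partition sets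
  set s : Fin k → Set Ω := fun t => {ω | h ω = t} with hs
  have hsm : ∀ t, MeasurableSet (s t) := fun t => hmh (measurableSet_singleton t)
  have hdisj : Pairwise (Function.onFun Disjoint s) := by
    intro a b hab
    simp only [Function.onFun, Set.disjoint_left]
    rintro ω (rfl : h ω = a) (rfl : h ω = b); exact hab rfl
  have hsun : (⋃ t, s t) = Set.univ := by
    ext ω; simp [hs]
  have hpart : ∀ f : Ω → ℝ, Integrable f μ →
      ∫ ω, f ω ∂μ = ∑ t, ∫ ω in s t, f ω ∂μ := by
    intro f hf
    rw [← setIntegral_univ, ← hsun]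
    exact integral_iUnion_fintype hsm hdisj fun t => hf.integrableOn
  -- vanishing on measure-zero pieces
  have hzero : ∀ t, w t = 0 → ∀ f : Ω → ℝ, ∫ ω in s t, f ω ∂μ = 0 := by
    intro t ht f
    have hμ : μ (s t) = 0 := by
      have := hw t
      rw [ht] at this
      have hfin : μ (s t) ≠ ⊤ := measure_ne_top μ _
      exact (ENNReal.toReal_eq_zero_iff _).mp this |>.resolve_right hfin
    rw [Measure.restrict_eq_zero.mpr hμ, integral_zero_measure]
  -- second moment per piece
  have h2 : ∀ i j t, ∫ ω in s t, x1 ω i * x2 ω j ∂μ = M1 i t * w t * M2 j t := by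
    intro i j t
    by_cases ht : w t = 0
    · rw [hzero t ht, ht]; ring
    · have := hci2 i j t
      rw [hmean1, hmean2] at this
      apply mul_right_cancel₀ ht
      linear_combination this
  -- third moment per piece
  have h3 : ∀ i j a t, ∫ ω in s t, x1 ω i * x2 ω j * x3 ω a ∂μ
      = M1 i t * M3 a t * w t * M2 j t := by
    intro i j a t
    by_cases ht : w t = 0
    · rw [hzero t ht, ht]; ring
    · have := hci3 i j a t
      rw [hmean1, hmean2, hmean3] at this
      have hw2 : (w t) ^ 2 ≠ 0 := pow_ne_zero _ ht
      apply mul_right_cancel₀ hw2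
      linear_combination this
  constructor
  · ext i j
    rw [Matrix.mul_apply]
    simp only [Matrix.of_apply]
    rw [hpart _ (hint2 i j)]
    refine Finset.sum_congr rfl fun t _ => ?_
    rw [h2 i j t, Matrix.mul_apply]
    simp [Matrix.diagonal, Matrix.transpose_apply, Finset.mul_sum]
  · intro η
    ext i j
    rw [Matrix.mul_apply]
    simp only [Matrix.of_apply]
    have hintf : Integrable (fun ω => x1 ω i * x2 ω j * (∑ a, η a * x3 ω a)) μ := by
      have : (fun ω => x1 ω i * x2 ω j * (∑ a, η a * x3 ω a))
          = fun ω => ∑ a, η a * (x1 ω i * x2 ω j * x3 ω a) := by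
        funext ω; rw [Finset.mul_sum]; exact Finset.sum_congr rfl fun a _ => by ring
      rw [this]
      exact integrable_finset_sum _ fun a _ => (hint3 i j a).const_mul _
    rw [hpart _ hintf]
    have key : ∀ t, ∫ ω in s t, x1 ω i * x2 ω j * (∑ a, η a * x3 ω a) ∂μ
        = ∑ a, η a * (M1 i t * M3 a t * w t * M2 j t) := by
      intro t
      have heq : ∀ ω, x1 ω i * x2 ω j * (∑ a, η a * x3 ω a)
          = ∑ a, η a * (x1 ω i * x2 ω j * x3 ω a) := by
        intro ω; rw [Finset.mul_sum]; exact Finset.sum_congr rfl fun a _ => by ring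
      calc ∫ ω in s t, x1 ω i * x2 ω j * (∑ a, η a * x3 ω a) ∂μ
          = ∫ ω in s t, ∑ a, η a * (x1 ω i * x2 ω j * x3 ω a) ∂μ := by
            exact integral_congr_ae (Filter.Eventually.of_forall fun ω => heq ω)
        _ = ∑ a, ∫ ω in s t, η a * (x1 ω i * x2 ω j * x3 ω a) ∂μ :=
            integral_finset_sum _ fun a _ => ((hint3 i j a).const_mul _).integrableOn
        _ = ∑ a, η a * (M1 i t * M3 a t * w t * M2 j t) := by
            refine Finset.sum_congr rfl fun a _ => ?_
            rw [integral_const_mul, h3 i j a t]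
    rw [Finset.sum_congr rfl fun t _ => key t]
    simp only [Matrix.mul_apply, Matrix.diagonal_apply, Matrix.transpose_apply, Matrix.mulVec,
      dotProduct, mul_ite, ite_mul, mul_zero, zero_mul, Finset.sum_ite_eq,
      Finset.sum_ite_eq', Finset.mem_univ, if_true]
    refine Finset.sum_congr rfl fun t _ => ?_
    simp only [Finset.sum_mul, Finset.mul_sum]
    refine Finset.sum_congr rfl fun a _ => ?_
    ring
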